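/- Let K, M ≥ 0 be integers with K + M ≥ 1, let k_1, …, k_K be integers with k_j ≥ 1 and m_1, …, m_M be integers with m_j ≥ 4, and assume that at least one k_j ≥ 2 or M ≥ 1. Define the complex polynomial F(t) = Σ_{j=1}^{K} b_{k_j}(t)·Π_{i≠j} a_{k_i}(t)·Π_{r=1}^{M} d_{m_r}(t) + Σ_{j=1}^{M} e_{m_j}(t)·Π_{i=1}^{K} a_{k_i}(t)·Π_{r≠j} d_{m_r}(t). Then every complex root t₀ of F satisfies |t₀| = 1 (i.e., F is unimodular). -/

import Mathlib

open Polynomial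
open Complex

/-- Poincaré polynomial `a_k(t) = 1 + t² + ⋯ + t^{2(k-1)}` of the moduli algebra of `A_k`. -/
noncomputable def polyA (k : ℕ) : Polynomial ℂ :=
  ∑ s ∈ Finset.range k, Polynomial.X ^ (2 * s)

/-- Poincaré polynomial `b_k(t) = 1 + t² + ⋯ + t^{2(k-2)}` of the Lie algebra of derivations
for `A_k` (with `b_1 = 0`). -/
noncomputable def polyB (k : ℕ) : Polynomial ℂ :=
  ∑ s ∈ Finset.range (k - 1), Polynomial.X ^ (2 * s)


lemma abs_sin_nat_mul_le (n : ℕ) (x : ℝ) : |Real.sin (n * x)| ≤ n * |Real.sin x| := by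
  induction n with
  | zero => simp
  | succ n ih =>
    have : ((n:ℝ)+1) * x = n*x + x := by ring
    rw [Nat.cast_succ, this, Real.sin_add]
    calc |Real.sin (n*x) * Real.cos x + Real.cos (n*x) * Real.sin x|
        ≤ |Real.sin (n*x) * Real.cos x| + |Real.cos (n*x) * Real.sin x| := abs_add_le _ _
      _ ≤ |Real.sin (n*x)| * 1 + 1 * |Real.sin x| := by
          rw [abs_mul, abs_mul]
          gcongr <;> [exact Real.abs_cos_le_one x; exact Real.abs_cos_le_one _]
      _ ≤ n * |Real.sin x| + 1 * |Real.sin x| := by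
          rw [mul_one]
          gcongr
      _ = ((n:ℝ)+1) * |Real.sin x| := by ring

lemma sin_nat_mul_sin_le (n : ℕ) (x : ℝ) : Real.sin (n*x) * Real.sin x ≤ n * Real.sin x ^ 2 := by
  calc Real.sin (n*x) * Real.sin x ≤ |Real.sin (n*x) * Real.sin x| := le_abs_self _
    _ = |Real.sin (n*x)| * |Real.sin x| := abs_mul _ _
    _ ≤ (n * |Real.sin x|) * |Real.sin x| := by gcongr; exact abs_sin_nat_mul_le n x
    _ = n * Real.sin x ^ 2 := by rw [mul_assoc, ← abs_mul, ← _root_.sq_abs, sq, abs_mul]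

lemma nat_mul_sinh_le (n : ℕ) (y : ℝ) (hy : 0 ≤ y) : (n:ℝ) * Real.sinh y ≤ Real.sinh (n * y) := by
  induction n with
  | zero => simp
  | succ n ih =>
    have h1 : ((n:ℝ)+1) * y = n*y + y := by ring
    rw [Nat.cast_succ, h1, Real.sinh_add]
    have hsy : 0 ≤ Real.sinh y := Real.sinh_nonneg_iff.2 hy
    have hsny : 0 ≤ Real.sinh (n*y) := Real.sinh_nonneg_iff.2 (by positivity)
    calc ((n:ℝ)+1) * Real.sinh y = n * Real.sinh y + Real.sinh y := by ring
      _ ≤ Real.sinh (n*y) * 1 + 1 * Real.sinh y := by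
          rw [mul_one, one_mul]; gcongr
      _ ≤ Real.sinh (n*y) * Real.cosh y + Real.cosh (n*y) * Real.sinh y := by
          gcongr <;> [exact Real.one_le_cosh y; exact Real.one_le_cosh _]

lemma nat_mul_sinh_lt (n : ℕ) (hn : 2 ≤ n) (y : ℝ) (hy : 0 < y) :
    (n:ℝ) * Real.sinh y < Real.sinh (n * y) := by
  obtain ⟨p, rfl⟩ : ∃ p, n = p + 2 := ⟨n - 2, by omega⟩
  have h1 : (((p+2:ℕ)):ℝ) * y = (p+1)*y + y := by push_cast; ring
  rw [h1, Real.sinh_add]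
  have hsy : 0 < Real.sinh y := Real.sinh_pos_iff.2 hy
  have hp1 : (0:ℝ) < ((p:ℝ)+1) * y := by positivity
  have hsny : ((p:ℝ)+1) * Real.sinh y ≤ Real.sinh (((p:ℝ)+1) * y) := by
    have := nat_mul_sinh_le (p+1) y hy.le
    push_cast at this ⊢; linarith
  have hc1 : 1 < Real.cosh (((p:ℝ)+1)*y) := by
    rw [Real.one_lt_cosh]
    positivity
  have hcy : 1 ≤ Real.cosh y := Real.one_le_cosh y
  have hsnny : 0 < Real.sinh (((p:ℝ)+1) * y) := Real.sinh_pos_iff.2 hp1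
  push_cast
  nlinarith

lemma sinh_mul_sinh_ge (n : ℕ) (y : ℝ) : (n:ℝ) * Real.sinh y ^ 2 ≤ Real.sinh y * Real.sinh (n * y) := by
  rcases le_or_gt 0 y with hy | hy
  · have h1 := nat_mul_sinh_le n y hy
    have h2 : 0 ≤ Real.sinh y := Real.sinh_nonneg_iff.2 hy
    nlinarith
  · have h1 := nat_mul_sinh_le n (-y) (by linarith)
    have h2 : 0 ≤ Real.sinh (-y) := Real.sinh_nonneg_iff.2 (by linarith)
    rw [Real.sinh_neg] at h2
    rw [Real.sinh_neg] at h1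
    have h3 : (n:ℝ) * -y = -(n*y) := by ring
    rw [h3, Real.sinh_neg] at h1
    nlinarith

lemma sinh_mul_sinh_gt (n : ℕ) (hn : 2 ≤ n) (y : ℝ) (hy : y ≠ 0) :
    (n:ℝ) * Real.sinh y ^ 2 < Real.sinh y * Real.sinh (n * y) := by
  rcases lt_or_gt_of_ne hy with h | h
  · have h1 := nat_mul_sinh_lt n hn (-y) (by linarith)
    have h2 : 0 < Real.sinh (-y) := Real.sinh_pos_iff.2 (by linarith)
    rw [Real.sinh_neg] at h2
    rw [Real.sinh_neg, show (n:ℝ) * -y = -(n*y) by ring, Real.sinh_neg] at h1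
    nlinarith
  · have h1 := nat_mul_sinh_lt n hn y h
    have h2 : 0 < Real.sinh y := Real.sinh_pos_iff.2 h
    nlinarith

/-- core nonneg, sin case -/
lemma core_sin (n : ℕ) (x y : ℝ) :
    0 ≤ (Real.sin x * Real.sinh (n*y) - Real.sin (n*x) * Real.sinh y) * (Real.sin x * Real.sinh y) := by
  have h1 := sinh_mul_sinh_ge n y
  have h2 := sin_nat_mul_sin_le n x
  nlinarith [sq_nonneg (Real.sin x), sq_nonneg (Real.sinh y)]

lemma core_sin_pos (n : ℕ) (hn : 2 ≤ n) (x y : ℝ) (hx : Real.sin x ≠ 0) (hy : Real.sinh y ≠ 0) :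
    0 < (Real.sin x * Real.sinh (n*y) - Real.sin (n*x) * Real.sinh y) * (Real.sin x * Real.sinh y) := by
  have hy' : y ≠ 0 := fun h => hy (by rw [h, Real.sinh_zero])
  have h1 := sinh_mul_sinh_gt n hn y hy'
  have h2 := sin_nat_mul_sin_le n x
  have hx2 : 0 < Real.sin x ^ 2 := by positivity
  have hy2 : 0 < Real.sinh y ^ 2 := by positivity
  nlinarith

lemma sin_nat_mul_sin_ge (n : ℕ) (x : ℝ) : -(n * Real.sin x ^ 2) ≤ Real.sin (n*x) * Real.sin x := by
  have h := abs_sin_nat_mul_le n x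
  have h2 : |Real.sin (n*x) * Real.sin x| ≤ n * Real.sin x ^ 2 := by
    rw [abs_mul]
    calc |Real.sin (n*x)| * |Real.sin x| ≤ (n * |Real.sin x|) * |Real.sin x| := by gcongr
      _ = n * Real.sin x ^ 2 := by rw [mul_assoc, ← abs_mul, ← _root_.sq_abs, sq, abs_mul]
  linarith [neg_abs_le (Real.sin (n*x) * Real.sin x)]

lemma core_cos_pos (n : ℕ) (hn : 1 ≤ n) (x y : ℝ) (hx : Real.sin x ≠ 0) (hy : Real.sinh y ≠ 0) :
    0 < (Real.sin x * Real.sinh (n*y) + Real.sin (n*x) * Real.sinh y) * (Real.sin x * Real.sinh y) := by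
  have hx2 : 0 < Real.sin x ^ 2 := by positivity
  have hy2 : 0 < Real.sinh y ^ 2 := by positivity
  rcases eq_or_lt_of_le hn with h1 | h1
  · rw [← h1]; push_cast; rw [one_mul, one_mul]; nlinarith
  · have hn2 : 2 ≤ n := h1
    have h2 := sinh_mul_sinh_gt n hn2 y (fun h => hy (by rw [h, Real.sinh_zero]))
    have h3 := sin_nat_mul_sin_ge n x
    nlinarith

/-- Product-to-sum identity, sin-ratio numerator. -/
lemma ID1 (p q a b : ℝ) :
    Real.cos (p*a) * Real.sinh (p*b) * (Real.sin (q*a) * Real.cosh (q*b))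
      - Real.sin (p*a) * Real.cosh (p*b) * (Real.cos (q*a) * Real.sinh (q*b))
    = (1/2) * (Real.sin ((q-p)*a) * Real.sinh ((p+q)*b) - Real.sin ((p+q)*a) * Real.sinh ((q-p)*b)) := by
  rw [show (q-p)*a = q*a - p*a by ring, show (p+q)*b = p*b + q*b by ring,
      show (p+q)*a = p*a + q*a by ring, show (q-p)*b = q*b - p*b by ring,
      Real.sin_sub, Real.sinh_add, Real.sin_add, Real.sinh_sub]
  ring

/-- Product-to-sum identity, cos-ratio numerator. -/
lemma ID2 (p q a b : ℝ) :
    -(Real.sin (p*a) * Real.sinh (p*b)) * (Real.cos (q*a) * Real.cosh (q*b))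
      - Real.cos (p*a) * Real.cosh (p*b) * (-(Real.sin (q*a) * Real.sinh (q*b)))
    = (1/2) * (Real.sin ((q-p)*a) * Real.sinh ((p+q)*b) + Real.sin ((p+q)*a) * Real.sinh ((q-p)*b)) := by
  rw [show (q-p)*a = q*a - p*a by ring, show (p+q)*b = p*b + q*b by ring,
      show (p+q)*a = p*a + q*a by ring, show (q-p)*b = q*b - p*b by ring,
      Real.sin_sub, Real.sinh_add, Real.sin_add, Real.sinh_sub]
  ring

open Complex in
lemma CX1 (z : ℂ) : 1 - Complex.exp (2*(I*z)) = -2*I*Complex.exp (I*z) * Complex.sin z := by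
  rw [Complex.sin]
  have h1 : Complex.exp (I*z) * Complex.exp (-z*I) = 1 := by
    rw [← Complex.exp_add, show I*z + -z*I = 0 by ring, Complex.exp_zero]
  have h2 : Complex.exp (I*z) * Complex.exp (z*I) = Complex.exp (2*(I*z)) := by
    rw [← Complex.exp_add, show I*z + z*I = 2*(I*z) by ring]
  linear_combination -h1 + h2 + (Complex.exp (I*z) * Complex.exp (-z*I) - Complex.exp (I*z) * Complex.exp (z*I)) * Complex.I_sq

open Complex in
lemma CX2 (z : ℂ) : 1 + Complex.exp (2*(I*z)) = 2*Complex.exp (I*z) * Complex.cos z := by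
  rw [Complex.cos]
  have h1 : Complex.exp (I*z) * Complex.exp (-z*I) = 1 := by
    rw [← Complex.exp_add, show I*z + -z*I = 0 by ring, Complex.exp_zero]
  have h2 : Complex.exp (I*z) * Complex.exp (z*I) = Complex.exp (2*(I*z)) := by
    rw [← Complex.exp_add, show I*z + z*I = 2*(I*z) by ring]
  linear_combination -h1 - h2

lemma sinre (z : ℂ) : (Complex.sin z).re = Real.sin z.re * Real.cosh z.im := by
  rw [Complex.sin_eq]
  simp [← Complex.ofReal_sin, ← Complex.ofReal_cos, ← Complex.ofReal_sinh, ← Complex.ofReal_cosh]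
lemma sinim (z : ℂ) : (Complex.sin z).im = Real.cos z.re * Real.sinh z.im := by
  rw [Complex.sin_eq]
  simp [← Complex.ofReal_sin, ← Complex.ofReal_cos, ← Complex.ofReal_sinh, ← Complex.ofReal_cosh]
lemma cosre (z : ℂ) : (Complex.cos z).re = Real.cos z.re * Real.cosh z.im := by
  rw [Complex.cos_eq]
  simp [← Complex.ofReal_sin, ← Complex.ofReal_cos, ← Complex.ofReal_sinh, ← Complex.ofReal_cosh]
lemma cosim (z : ℂ) : (Complex.cos z).im = -(Real.sin z.re * Real.sinh z.im) := by
  rw [Complex.cos_eq]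
  simp [← Complex.ofReal_sin, ← Complex.ofReal_cos, ← Complex.ofReal_sinh, ← Complex.ofReal_cosh]


lemma ratio_pos (u : ℝ) (hu : |u| ≠ 1) (a : ℕ) : 0 < (1 + u^a) * (1 + u^(a+2)) := by
  rcases le_or_gt 0 u with h | h
  · have h1 : 0 ≤ u^a := pow_nonneg h a
    have h2 : 0 ≤ u^(a+2) := pow_nonneg h _
    nlinarith
  · rcases Nat.even_or_odd a with he | ho
    · have h1 : 0 ≤ u^a := he.pow_nonneg u
      have h2 : 0 ≤ u^(a+2) := (by simpa using he.add (even_two) : Even (a+2)).pow_nonneg u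
      nlinarith
    · have hw : 0 < -u := by linarith
      have hua : u^a = -(-u)^a := by
        rw [ho.neg_pow]; ring_nf
      have hua2 : u^(a+2) = -(-u)^(a+2) := by
        rw [(by simpa using ho.add_even even_two : Odd (a+2)).neg_pow]; ring_nf
      have huabs : |u| = -u := abs_of_neg h
      rw [huabs] at hu
      have ha0 : a ≠ 0 := by rintro rfl; exact (Nat.not_odd_iff_even.2 Even.zero) ho
      rcases lt_or_gt_of_ne hu with h1 | h1
      · have p1 : (-u)^a < 1 := pow_lt_one₀ hw.le h1 ha0
        have p2 : (-u)^(a+2) < 1 := pow_lt_one₀ hw.le h1 (by omega)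
        nlinarith
      · have p1 : 1 < (-u)^a := one_lt_pow₀ h1 ha0
        have p2 : 1 < (-u)^(a+2) := one_lt_pow₀ h1 (by omega)
        nlinarith


/-- Unimodularity of the Poincaré polynomial of the Lie algebra of derivations of the moduli
algebra of a semisimple singularity of type `A ⊕ D`. -/
theorem unimodular_AD
    (K M : ℕ) (hKM : 1 ≤ K + M)
    (k : Fin K → ℕ) (hk : ∀ j, 1 ≤ k j)
    (m : Fin M → ℕ) (hm : ∀ j, 4 ≤ m j)
    (hnontriv : (∃ j, 2 ≤ k j) ∨ 1 ≤ M)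
    (d e : Fin M → Polynomial ℂ)
    (hd : ∀ r, (1 - Polynomial.X ^ 2) * d r
        = (1 + Polynomial.X ^ (m r - 2)) * (1 - Polynomial.X ^ (m r)))
    (he : ∀ r, (1 - Polynomial.X ^ 2) * e r
        = (1 + Polynomial.X ^ (m r - 4)) * (1 - Polynomial.X ^ (m r)))
    (F : Polynomial ℂ)
    (hF : F =
        (∑ j : Fin K, polyB (k j) * (∏ i ∈ Finset.univ.erase j, polyA (k i)) * ∏ r, d r)
      + (∑ j : Fin M, e j * (∏ i, polyA (k i)) * ∏ r ∈ Finset.univ.erase j, d r)) :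
    ∀ t₀ : ℂ, F.IsRoot t₀ → ‖t₀‖ = 1 := by
  intro T hroot
  by_contra habs
  -- powers of T are never 1 or -1
  have habsn : ∀ n : ℕ, n ≠ 0 → ‖T‖ ^ n ≠ 1 := by
    intro n hn h1
    rcases lt_trichotomy ‖T‖ 1 with h | h | h
    · have := pow_lt_one₀ (norm_nonneg T) h hn
      rw [h1] at this; exact lt_irrefl 1 this
    · exact habs h
    · have := one_lt_pow₀ h hn
      rw [h1] at this; exact lt_irrefl 1 this
  have hTn1 : ∀ n : ℕ, n ≠ 0 → T ^ n ≠ 1 := by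
    intro n hn h
    exact habsn n hn (by rw [← norm_pow, h, norm_one])
  have hTnm1 : ∀ n : ℕ, n ≠ 0 → T ^ n ≠ -1 := by
    intro n hn h
    apply habsn n hn
    rw [← norm_pow, h]
    simp
  have hT2 : T ^ 2 - 1 ≠ 0 := sub_ne_zero.2 (hTn1 2 (by norm_num))
  -- geometric sum identities
  have hA : ∀ n : ℕ, (polyA n).eval T * (T ^ 2 - 1) = T ^ (2 * n) - 1 := by
    intro n
    have h1 : (polyA n).eval T = ∑ s ∈ Finset.range n, (T ^ 2) ^ s := by
      simp [polyA, Polynomial.eval_finset_sum, pow_mul]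
    rw [h1, geom_sum_mul, ← pow_mul]
  have hB : ∀ n : ℕ, (polyB n).eval T * (T ^ 2 - 1) = T ^ (2 * (n - 1)) - 1 := by
    intro n
    have h1 : (polyB n).eval T = ∑ s ∈ Finset.range (n - 1), (T ^ 2) ^ s := by
      simp [polyB, Polynomial.eval_finset_sum, pow_mul]
    rw [h1, geom_sum_mul, ← pow_mul]
  have hAne : ∀ n : ℕ, n ≠ 0 → (polyA n).eval T ≠ 0 := by
    intro n hn h0
    have := hA n
    rw [h0, zero_mul] at this
    exact hTn1 (2 * n) (by omega) (by linear_combination -this)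
  -- evaluated d, e relations
  have hdT : ∀ r, (1 - T ^ 2) * (d r).eval T = (1 + T ^ (m r - 2)) * (1 - T ^ (m r)) := by
    intro r
    have := congrArg (Polynomial.eval T) (hd r)
    simpa using this
  have heT : ∀ r, (1 - T ^ 2) * (e r).eval T = (1 + T ^ (m r - 4)) * (1 - T ^ (m r)) := by
    intro r
    have := congrArg (Polynomial.eval T) (he r)
    simpa using this
  have hm2 : ∀ r, 1 + T ^ (m r - 2) ≠ 0 := by
    intro r h
    exact hTnm1 (m r - 2) (by have := hm r; omega) (by linear_combination h)
  have hm4 : ∀ r, 1 + T ^ (m r - 4) ≠ 0 := by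
    intro r h
    rcases Nat.eq_or_lt_of_le (hm r) with h4 | h4
    · rw [← h4] at h; norm_num at h
    · exact hTnm1 (m r - 4) (by omega) (by linear_combination h)
  have hmm : ∀ r, 1 - T ^ (m r) ≠ 0 := by
    intro r h
    exact hTn1 (m r) (by have := hm r; omega) (by linear_combination -h)
  have hDne : ∀ r, (d r).eval T ≠ 0 := by
    intro r h0
    have := hdT r
    rw [h0, mul_zero] at this
    rcases mul_eq_zero.1 this.symm with h | h
    · exact hm2 r h
    · exact hmm r h
  -- the sum S of ratios
  set S : ℂ := (∑ j, (polyB (k j)).eval T / (polyA (k j)).eval T)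
      + (∑ r, (e r).eval T / (d r).eval T) with hSdef
  have hPA : (∏ i, (polyA (k i)).eval T) ≠ 0 :=
    Finset.prod_ne_zero_iff.2 fun i _ => hAne (k i) (by have := hk i; omega)
  have hPD : (∏ r, (d r).eval T) ≠ 0 :=
    Finset.prod_ne_zero_iff.2 fun r _ => hDne r
  have hS0 : S = 0 := by
    have hev : Polynomial.eval T F
        = (∑ j, (polyB (k j)).eval T * (∏ i ∈ Finset.univ.erase j, (polyA (k i)).eval T)
            * ∏ r, (d r).eval T)
        + (∑ j, (e j).eval T * (∏ i, (polyA (k i)).eval T)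
            * ∏ r ∈ Finset.univ.erase j, (d r).eval T) := by
      rw [hF]
      simp [Polynomial.eval_finset_sum, Polynomial.eval_prod]
    have hfac : Polynomial.eval T F
        = ((∏ i, (polyA (k i)).eval T) * ∏ r, (d r).eval T) * S := by
      rw [hev, hSdef, mul_add, Finset.mul_sum, Finset.mul_sum]
      congr 1
      · apply Finset.sum_congr rfl
        intro j _
        have hj : (polyA (k j)).eval T * (∏ i ∈ Finset.univ.erase j, (polyA (k i)).eval T)
            = ∏ i, (polyA (k i)).eval T :=
          Finset.mul_prod_erase Finset.univ (fun i => (polyA (k i)).eval T) (Finset.mem_univ j)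
        rw [← hj]
        field_simp [hAne (k j) (by have := hk j; omega)]
      · apply Finset.sum_congr rfl
        intro j _
        have hj : (d j).eval T * (∏ r ∈ Finset.univ.erase j, (d r).eval T)
            = ∏ r, (d r).eval T :=
          Finset.mul_prod_erase Finset.univ (fun r => (d r).eval T) (Finset.mem_univ j)
        rw [← hj]
        field_simp [hDne j]
    have : ((∏ i, (polyA (k i)).eval T) * ∏ r, (d r).eval T) * S = 0 := by
      rw [← hfac]; exact hroot
    rcases mul_eq_zero.1 this with h | h
    · exact absurd h (mul_ne_zero hPA hPD)
    · exact h
  rcases eq_or_ne T.im 0 with him | him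
  · -- ===================== REAL CASE =====================
    have hre : T = ((T.re : ℝ) : ℂ) := by
      apply Complex.ext <;> simp [him]
    set r : ℝ := T.re with hrdef
    have habsr : |r| ≠ 1 := by
      rw [hre, Complex.norm_real, Real.norm_eq_abs] at habs; exact habs
    have h1mT2 : (1 : ℂ) - T ^ 2 ≠ 0 := by
      intro h; exact hT2 (by linear_combination -h)
    -- the values as real numbers
    have hAr : ∀ n : ℕ, (polyA n).eval T = ((∑ s ∈ Finset.range n, r ^ (2*s) : ℝ) : ℂ) := by
      intro n
      rw [hre]
      simp only [polyA, Polynomial.eval_finset_sum, Polynomial.eval_pow, Polynomial.eval_X]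
      push_cast
      rfl
    have hBr : ∀ n : ℕ, (polyB n).eval T = ((∑ s ∈ Finset.range (n-1), r ^ (2*s) : ℝ) : ℂ) := by
      intro n
      rw [hre]
      simp only [polyB, Polynomial.eval_finset_sum, Polynomial.eval_pow, Polynomial.eval_X]
      push_cast
      rfl
    have hED : ∀ j, (e j).eval T / (d j).eval T
        = (1 + T ^ (m j - 4)) / (1 + T ^ (m j - 2)) := by
      intro j
      rw [div_eq_div_iff (hDne j) (hm2 j)]
      apply mul_left_cancel₀ h1mT2
      linear_combination (1 + T ^ (m j - 2)) * heT j - (1 + T ^ (m j - 4)) * hdT j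
    -- real sums
    set s1 : ℝ := ∑ j, (∑ s ∈ Finset.range (k j - 1), r ^ (2*s))
        / (∑ s ∈ Finset.range (k j), r ^ (2*s)) with hs1
    set s2 : ℝ := ∑ j, (1 + r ^ (m j - 4)) / (1 + r ^ (m j - 2)) with hs2
    have hSr : S = ((s1 + s2 : ℝ) : ℂ) := by
      have e1 : (∑ j, (polyB (k j)).eval T / (polyA (k j)).eval T) = ((s1 : ℝ) : ℂ) := by
        rw [hs1]
        push_cast
        apply Finset.sum_congr rfl
        intro j _
        rw [hAr, hBr]
        push_cast
        rfl
      have e2 : (∑ j, (e j).eval T / (d j).eval T) = ((s2 : ℝ) : ℂ) := by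
        rw [hs2]
        push_cast
        apply Finset.sum_congr rfl
        intro j _
        rw [hED j, hre]
      rw [hSdef, e1, e2]
      push_cast
      ring
    -- positivity
    have hrpow : ∀ s : ℕ, (0:ℝ) ≤ r ^ (2*s) := by
      intro s; rw [pow_mul]; positivity
    have hα : ∀ n : ℕ, 1 ≤ n → (1:ℝ) ≤ ∑ s ∈ Finset.range n, r ^ (2*s) := by
      intro n hn
      have h0 := Finset.single_le_sum (f := fun s => r ^ (2*s))
        (fun s _ => hrpow s) (Finset.mem_range.2 (by omega : 0 < n))
      simpa using h0
    have hterm1 : ∀ j, 0 ≤ (∑ s ∈ Finset.range (k j - 1), r ^ (2*s))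
        / (∑ s ∈ Finset.range (k j), r ^ (2*s)) := by
      intro j
      apply div_nonneg (Finset.sum_nonneg fun s _ => hrpow s)
      linarith [hα (k j) (hk j)]
    have hterm2 : ∀ j : Fin M, 0 < (1 + r ^ (m j - 4)) / (1 + r ^ (m j - 2)) := by
      intro j
      have ha2 : m j - 2 = (m j - 4) + 2 := by have := hm j; omega
      have hx := ratio_pos r habsr (m j - 4)
      have h2 : (1 + r ^ ((m j - 4) + 2)) ≠ 0 := by
        intro h; rw [h, mul_zero] at hx; exact lt_irrefl 0 hx
      rw [ha2]
      have heq : (1 + r ^ (m j - 4)) / (1 + r ^ ((m j - 4)+2))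
          = ((1 + r ^ (m j - 4)) * (1 + r ^ ((m j - 4)+2))) / ((1 + r ^ ((m j - 4)+2))^2) := by
        field_simp
      rw [heq]
      exact div_pos hx (pow_two_pos_of_ne_zero h2)
    have htot : (0:ℝ) < s1 + s2 := by
      rcases hnontriv with ⟨j0, hj0⟩ | hM
      · have hpos1 : 0 < (∑ s ∈ Finset.range (k j0 - 1), r ^ (2*s))
            / (∑ s ∈ Finset.range (k j0), r ^ (2*s)) := by
          apply div_pos
          · calc (0:ℝ) < 1 := one_pos
              _ ≤ _ := hα (k j0 - 1) (by omega)
          · calc (0:ℝ) < 1 := one_pos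
              _ ≤ _ := hα (k j0) (hk j0)
        have h1 : 0 < s1 := Finset.sum_pos' (fun j _ => hterm1 j) ⟨j0, Finset.mem_univ j0, hpos1⟩
        have h2 : 0 ≤ s2 := Finset.sum_nonneg fun j _ => (hterm2 j).le
        linarith
      · have : Nonempty (Fin M) := ⟨⟨0, hM⟩⟩
        have h2 : 0 < s2 := Finset.sum_pos (fun j _ => hterm2 j) Finset.univ_nonempty
        have h1 : 0 ≤ s1 := Finset.sum_nonneg fun j _ => hterm1 j
        linarith
    rw [hSr] at hS0
    rw [Complex.ofReal_eq_zero] at hS0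
    linarith [htot, hS0.ge]
  · -- ===================== COMPLEX CASE =====================
    have h1mT2 : (1 : ℂ) - T ^ 2 ≠ 0 := by
      intro h; exact hT2 (by linear_combination -h)
    have hT0 : T ≠ 0 := by
      intro h; rw [h] at him; simp at him
    set a : ℝ := Complex.arg T / 2 with hadef
    set b : ℝ := - Real.log ‖T‖ / 2 with hbdef
    set φ : ℂ := (a : ℂ) + (b : ℂ) * I with hφdef
    have hφre : φ.re = a := by rw [hφdef]; simp
    have hφim : φ.im = b := by rw [hφdef]; simp
    have hlog : 2 * (I * φ) = Complex.log T := by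
      apply Complex.ext
      · rw [Complex.log_re, hφdef]
        simp [hadef, hbdef]
        ring
      · rw [Complex.log_im, hφdef]
        simp [hadef, hbdef]
        ring
    have hTeq : T = Complex.exp (2 * (I * φ)) := by rw [hlog, Complex.exp_log hT0]
    have hexp : ∀ n : ℕ, T ^ n = Complex.exp (2 * (I * ((n:ℂ) * φ))) := by
      intro n
      rw [hTeq, ← Complex.exp_nat_mul]
      congr 1
      ring
    have hb0 : b ≠ 0 := by
      rw [hbdef]
      intro h
      have hlog0 : Real.log ‖T‖ = 0 := by linarith
      rcases Real.log_eq_zero.1 hlog0 with h1 | h1 | h1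
      · exact (norm_ne_zero_iff.2 hT0) h1
      · exact habs h1
      · linarith [norm_nonneg T]
    have hsinhb : Real.sinh (2*b) ≠ 0 := by
      rw [ne_eq, Real.sinh_eq_zero]
      intro h; exact hb0 (by linarith)
    have hsina : Real.sin (2*a) ≠ 0 := by
      have h2a : 2*a = Complex.arg T := by rw [hadef]; ring
      rw [h2a, Complex.sin_arg]
      exact div_ne_zero him (norm_ne_zero_iff.2 hT0)
    set σ : ℝ := Real.sin (2*a) * Real.sinh (2*b) with hσdef
    -- factorization of 1 ± T^n through sin/cos
    have hfacsin : ∀ n : ℕ, 1 - T ^ (2*n)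
        = -2*I*Complex.exp (I*(((2*n : ℕ):ℂ)*φ)) * Complex.sin (((2*n : ℕ):ℂ)*φ) := by
      intro n
      rw [hexp (2*n), CX1]
    have hfaccos : ∀ n : ℕ, 1 + T ^ n
        = 2*Complex.exp (I*((n:ℂ)*φ)) * Complex.cos ((n:ℂ)*φ) := by
      intro n
      rw [hexp n, CX2]
    have hsinne : ∀ n : ℕ, n ≠ 0 → Complex.sin (((2*n : ℕ):ℂ)*φ) ≠ 0 := by
      intro n hn h0
      have h1 := hfacsin n
      rw [h0, mul_zero] at h1
      exact hTn1 (2*n) (by omega) (by linear_combination -h1)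
    have hcosne : ∀ n : ℕ, 1 + T ^ n ≠ 0 → Complex.cos ((n:ℂ)*φ) ≠ 0 := by
      intro n hne h0
      have h1 := hfaccos n
      rw [h0, mul_zero] at h1
      exact hne h1
    have hstep : ∀ n : ℕ, Complex.exp (I*((n:ℂ)*φ)) * T = Complex.exp (I*(((n+2 : ℕ):ℂ)*φ)) := by
      intro n
      rw [hTeq, ← Complex.exp_add]
      congr 1
      push_cast
      ring
    -- the sin-type terms
    have hsinterm : ∀ j : Fin K,
        0 ≤ (T * ((polyB (k j)).eval T / (polyA (k j)).eval T)).im * σ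
        ∧ (2 ≤ k j → 0 < (T * ((polyB (k j)).eval T / (polyA (k j)).eval T)).im * σ) := by
      intro j
      obtain ⟨n, hn⟩ : ∃ n : ℕ, k j = n + 1 := ⟨k j - 1, by have := hk j; omega⟩
      rw [hn]
      have hz1 : (1:ℂ) - T ^ (2*n)
          = -2*I*Complex.exp (I*(((2*n : ℕ):ℂ)*φ)) * Complex.sin (((2*n : ℕ):ℂ)*φ) := hfacsin n
      have hz2 : (1:ℂ) - T ^ (2*n+2)
          = -2*I*Complex.exp (I*(((2*n+2 : ℕ):ℂ)*φ)) * Complex.sin (((2*n+2 : ℕ):ℂ)*φ) := by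
        have := hfacsin (n+1)
        rw [show 2*(n+1) = 2*n+2 from by omega] at this
        exact this
      have hs2ne : Complex.sin (((2*n+2 : ℕ):ℂ)*φ) ≠ 0 := by
        have := hsinne (n+1) (by omega)
        rw [show 2*(n+1) = 2*n+2 from by omega] at this
        exact this
      have hE : Complex.exp (I*(((2*n : ℕ):ℂ)*φ)) * T = Complex.exp (I*(((2*n+2 : ℕ):ℂ)*φ)) :=
        hstep (2*n)
      have hAn := hAne (n+1) (by omega)
      have hBn := hB (n+1)
      have hAn' := hA (n+1)
      rw [show n+1-1 = n from by omega] at hBn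
      have hcross0 : (polyB (n+1)).eval T * (T^(2*(n+1)) - 1)
          = (T^(2*n) - 1) * (polyA (n+1)).eval T := by
        linear_combination (polyA (n+1)).eval T * hBn - (polyB (n+1)).eval T * hAn'
      rw [show 2*(n+1) = 2*n+2 from by omega] at hcross0
      have hcross : (T * (polyB (n+1)).eval T) * Complex.sin (((2*n+2 : ℕ):ℂ)*φ)
          = Complex.sin (((2*n : ℕ):ℂ)*φ) * (polyA (n+1)).eval T := by
        apply mul_right_cancel₀ (show (-2*I*Complex.exp (I*(((2*n : ℕ):ℂ)*φ)) : ℂ) ≠ 0 by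
          simp [Complex.exp_ne_zero, Complex.I_ne_zero])
        linear_combination (-1) * hcross0 + (polyA (n+1)).eval T * hz1
          - (polyB (n+1)).eval T * hz2
          - 2*I*(polyB (n+1)).eval T * Complex.sin (((2*n+2 : ℕ):ℂ)*φ) * hE
      have hratio : T * ((polyB (n+1)).eval T / (polyA (n+1)).eval T)
          = Complex.sin (((2*n : ℕ):ℂ)*φ) / Complex.sin (((2*n+2 : ℕ):ℂ)*φ) := by
        rw [← mul_div_assoc, div_eq_div_iff hAn hs2ne]
        exact hcross
      have hnq : 0 < Complex.normSq (Complex.sin (((2*n+2 : ℕ):ℂ)*φ)) :=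
        Complex.normSq_pos.2 hs2ne
      have hre1 : ((((2*n : ℕ):ℂ))*φ).re = ((2*n : ℕ):ℝ)*a := by simp [hφre]
      have him1 : ((((2*n : ℕ):ℂ))*φ).im = ((2*n : ℕ):ℝ)*b := by simp [hφim]
      have hre2 : ((((2*n+2 : ℕ):ℂ))*φ).re = ((2*n+2 : ℕ):ℝ)*a := by push_cast; simp [hφre]
      have him2 : ((((2*n+2 : ℕ):ℂ))*φ).im = ((2*n+2 : ℕ):ℝ)*b := by push_cast; simp [hφim]
      have hID := ID1 ((2*n : ℕ):ℝ) ((2*n+2 : ℕ):ℝ) a b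
      have e1 : (((2*n+2 : ℕ):ℝ) - ((2*n : ℕ):ℝ))*a = 2*a := by push_cast; ring
      have e2 : (((2*n : ℕ):ℝ) + ((2*n+2 : ℕ):ℝ))*b = ((2*n+1 : ℕ):ℝ)*(2*b) := by push_cast; ring
      have e3 : (((2*n : ℕ):ℝ) + ((2*n+2 : ℕ):ℝ))*a = ((2*n+1 : ℕ):ℝ)*(2*a) := by push_cast; ring
      have e4 : (((2*n+2 : ℕ):ℝ) - ((2*n : ℕ):ℝ))*b = 2*b := by push_cast; ring
      rw [e1, e2, e3, e4] at hID
      have himval : (T * ((polyB (n+1)).eval T / (polyA (n+1)).eval T)).im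
          = ((1/2) * (Real.sin (2*a) * Real.sinh (((2*n+1 : ℕ):ℝ)*(2*b))
              - Real.sin (((2*n+1 : ℕ):ℝ)*(2*a)) * Real.sinh (2*b)))
            / Complex.normSq (Complex.sin (((2*n+2 : ℕ):ℂ)*φ)) := by
        rw [hratio, Complex.div_im, sinim, sinre, sinre, sinim, hre1, him1, hre2, him2,
          div_sub_div_same, hID]
      constructor
      · rw [himval, div_mul_eq_mul_div]
        apply div_nonneg _ hnq.le
        have hcore := core_sin (2*n+1) (2*a) (2*b)
        rw [← hσdef] at hcore
        linarith
      · intro h2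
        rw [himval, div_mul_eq_mul_div]
        apply div_pos _ hnq
        have hcore := core_sin_pos (2*n+1) (by omega) (2*a) (2*b) hsina hsinhb
        rw [← hσdef] at hcore
        linarith
    -- the cos-type terms
    have hcosterm : ∀ j : Fin M,
        0 < (T * ((e j).eval T / (d j).eval T)).im * σ := by
      intro j
      obtain ⟨P, hP⟩ : ∃ P : ℕ, m j = P + 4 := ⟨m j - 4, by have := hm j; omega⟩
      have hd' := hdT j
      have he' := heT j
      have hm2' := hm2 j
      rw [hP, show P+4-2 = P+2 from by omega] at hd' hm2'
      rw [hP, show P+4-4 = P from by omega] at he'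
      have hz1 : (1:ℂ) + T ^ P
          = 2*Complex.exp (I*(((P : ℕ):ℂ)*φ)) * Complex.cos (((P : ℕ):ℂ)*φ) := hfaccos P
      have hz2 : (1:ℂ) + T ^ (P+2)
          = 2*Complex.exp (I*(((P+2 : ℕ):ℂ)*φ)) * Complex.cos (((P+2 : ℕ):ℂ)*φ) := hfaccos (P+2)
      have hc2ne : Complex.cos (((P+2 : ℕ):ℂ)*φ) ≠ 0 := hcosne (P+2) hm2'
      have hE : Complex.exp (I*(((P : ℕ):ℂ)*φ)) * T = Complex.exp (I*(((P+2 : ℕ):ℂ)*φ)) :=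
        hstep P
      have hDn := hDne j
      have hcrossE : (e j).eval T * (1 + T^(P+2)) = (1 + T^P) * (d j).eval T := by
        apply mul_left_cancel₀ h1mT2
        linear_combination (1 + T^(P+2)) * he' - (1 + T^P) * hd'
      have hcross : (T * (e j).eval T) * Complex.cos (((P+2 : ℕ):ℂ)*φ)
          = Complex.cos (((P : ℕ):ℂ)*φ) * (d j).eval T := by
        apply mul_right_cancel₀ (show (2*Complex.exp (I*(((P : ℕ):ℂ)*φ)) : ℂ) ≠ 0 by
          simp [Complex.exp_ne_zero])
        linear_combination hcrossE + (d j).eval T * hz1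
          - (e j).eval T * hz2 + 2*(e j).eval T * Complex.cos (((P+2 : ℕ):ℂ)*φ) * hE
      have hratio : T * ((e j).eval T / (d j).eval T)
          = Complex.cos (((P : ℕ):ℂ)*φ) / Complex.cos (((P+2 : ℕ):ℂ)*φ) := by
        rw [← mul_div_assoc, div_eq_div_iff hDn hc2ne]
        exact hcross
      have hnq : 0 < Complex.normSq (Complex.cos (((P+2 : ℕ):ℂ)*φ)) :=
        Complex.normSq_pos.2 hc2ne
      have hre1 : ((((P : ℕ):ℂ))*φ).re = ((P : ℕ):ℝ)*a := by simp [hφre]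
      have him1 : ((((P : ℕ):ℂ))*φ).im = ((P : ℕ):ℝ)*b := by simp [hφim]
      have hre2 : ((((P+2 : ℕ):ℂ))*φ).re = ((P+2 : ℕ):ℝ)*a := by push_cast; simp [hφre]
      have him2 : ((((P+2 : ℕ):ℂ))*φ).im = ((P+2 : ℕ):ℝ)*b := by push_cast; simp [hφim]
      have hID := ID2 ((P : ℕ):ℝ) ((P+2 : ℕ):ℝ) a b
      have e1 : (((P+2 : ℕ):ℝ) - ((P : ℕ):ℝ))*a = 2*a := by push_cast; ring
      have e2 : (((P : ℕ):ℝ) + ((P+2 : ℕ):ℝ))*b = ((P+1 : ℕ):ℝ)*(2*b) := by push_cast; ring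
      have e3 : (((P : ℕ):ℝ) + ((P+2 : ℕ):ℝ))*a = ((P+1 : ℕ):ℝ)*(2*a) := by push_cast; ring
      have e4 : (((P+2 : ℕ):ℝ) - ((P : ℕ):ℝ))*b = 2*b := by push_cast; ring
      rw [e1, e2, e3, e4] at hID
      have himval : (T * ((e j).eval T / (d j).eval T)).im
          = ((1/2) * (Real.sin (2*a) * Real.sinh (((P+1 : ℕ):ℝ)*(2*b))
              + Real.sin (((P+1 : ℕ):ℝ)*(2*a)) * Real.sinh (2*b)))
            / Complex.normSq (Complex.cos (((P+2 : ℕ):ℂ)*φ)) := by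
        rw [hratio, Complex.div_im, cosim, cosre, cosre, cosim, hre1, him1, hre2, him2,
          div_sub_div_same, hID]
      rw [himval, div_mul_eq_mul_div]
      apply div_pos _ hnq
      have hcore := core_cos_pos (P+1) (by omega) (2*a) (2*b) hsina hsinhb
      rw [← hσdef] at hcore
      linarith
    -- assembling the contradiction
    have hTS : (T * S).im * σ
        = (∑ j, (T * ((polyB (k j)).eval T / (polyA (k j)).eval T)).im * σ)
        + ∑ j, (T * ((e j).eval T / (d j).eval T)).im * σ := by
      rw [hSdef, mul_add, Finset.mul_sum, Finset.mul_sum, Complex.add_im,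
        Complex.im_sum, Complex.im_sum, add_mul, Finset.sum_mul, Finset.sum_mul]
    have hzero : (T * S).im * σ = 0 := by rw [hS0, mul_zero]; simp
    have hpos : 0 < (T * S).im * σ := by
      rw [hTS]
      rcases hnontriv with ⟨j0, hj0⟩ | hM
      · have h1 : 0 < ∑ j, (T * ((polyB (k j)).eval T / (polyA (k j)).eval T)).im * σ :=
          Finset.sum_pos' (fun j _ => (hsinterm j).1)
            ⟨j0, Finset.mem_univ _, (hsinterm j0).2 hj0⟩
        have h2 : 0 ≤ ∑ j, (T * ((e j).eval T / (d j).eval T)).im * σ :=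
          Finset.sum_nonneg fun j _ => (hcosterm j).le
        linarith
      · have hne : Nonempty (Fin M) := ⟨⟨0, hM⟩⟩
        have h2 : 0 < ∑ j, (T * ((e j).eval T / (d j).eval T)).im * σ :=
          Finset.sum_pos (fun j _ => hcosterm j) Finset.univ_nonempty
        have h1 : 0 ≤ ∑ j, (T * ((polyB (k j)).eval T / (polyA (k j)).eval T)).im * σ :=
          Finset.sum_nonneg fun j _ => (hsinterm j).1
        linarith
    rw [hzero] at hpos
    exact lt_irrefl 0 hpos
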